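/- On a path L^n with window size λ, let S be a target set whose smallest element is i and second-smallest is j, with D[i] = min{x > i : t(x)=2} ∉ S. If j > 2·D[i] − i + λ − 1, then S is not a TWC target set: node D[i] is never influenced, because its two neighbors are never simultaneously active. -/

import Mathlib

set_option linter.unusedVariables false

open Finset

variable {V : Type*} [Fintype V] [DecidableEq V]

/-- `influenced G t lam S r` : set of influenced nodes after round `r`. -/
def influenced (G : SimpleGraph V) [DecidableRel G.Adj] (t : V → ℕ) (lam : ℕ)
    (S : Finset V) : ℕ → Finset V
  | 0 => S
  | r + 1 =>
    let prev := influenced G t lam S r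
    let A := if r + 1 ≤ lam then prev else prev \ influenced G t lam S (r - lam)
    prev ∪ Finset.univ.filter fun v => t v ≤ (G.neighborFinset v ∩ A).card
  termination_by r => r
  decreasing_by all_goals omega

/-- `activeSet G t lam S r` : set of active nodes at round `r`. -/
def activeSet (G : SimpleGraph V) [DecidableRel G.Adj] (t : V → ℕ) (lam : ℕ)
    (S : Finset V) (r : ℕ) : Finset V :=
  if r = 0 then ∅
  else if r ≤ lam then influenced G t lam S (r - 1)
  else influenced G t lam S (r - 1) \ influenced G t lam S (r - 1 - lam)

def isTargetSet (G : SimpleGraph V) [DecidableRel G.Adj] (t : V → ℕ) (lam : ℕ)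
    (S : Finset V) : Prop :=
  ∃ r, influenced G t lam S r = Finset.univ

def pathGraph (n : ℕ) : SimpleGraph (Fin n) where
  Adj i j := i.val + 1 = j.val ∨ j.val + 1 = i.val
  symm := ⟨fun i j h => h.symm⟩
  loopless := ⟨fun i h => by rcases h with h | h <;> omega⟩

instance (n : ℕ) : DecidableRel (pathGraph n).Adj :=
  fun i j => inferInstanceAs (Decidable (i.val + 1 = j.val ∨ j.val + 1 = i.val))

def ringGraph (n : ℕ) : SimpleGraph (Fin n) where
  Adj i j := i ≠ j ∧ ((i.val + 1) % n = j.val ∨ (j.val + 1) % n = i.val)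
  symm := ⟨fun i j h => ⟨h.1.symm, h.2.symm⟩⟩
  loopless := ⟨fun i h => h.1 rfl⟩

instance (n : ℕ) : DecidableRel (ringGraph n).Adj :=
  fun i j => inferInstanceAs (Decidable (_ ∧ (_ ∨ _)))

instance : DecidableRel (⊤ : SimpleGraph V).Adj :=
  fun a b => inferInstanceAs (Decidable (a ≠ b))


lemma influenced_zero (G : SimpleGraph V) [DecidableRel G.Adj] (t : V → ℕ) (lam : ℕ)
    (S : Finset V) : influenced G t lam S 0 = S := by rw [influenced]

lemma influenced_succ (G : SimpleGraph V) [DecidableRel G.Adj] (t : V → ℕ) (lam : ℕ)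
    (S : Finset V) (r : ℕ) :
    influenced G t lam S (r+1) = influenced G t lam S r ∪
      Finset.univ.filter (fun v => t v ≤ (G.neighborFinset v ∩
        (if r + 1 ≤ lam then influenced G t lam S r
         else influenced G t lam S r \ influenced G t lam S (r - lam))).card) := by
  rw [influenced]

lemma influenced_mono (G : SimpleGraph V) [DecidableRel G.Adj] (t : V → ℕ) (lam : ℕ)
    (S : Finset V) {a b : ℕ} (hab : a ≤ b) :
    influenced G t lam S a ⊆ influenced G t lam S b := by
  induction b with
  | zero => simp [Nat.le_zero.mp hab]
  | succ b ihb =>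
    rcases Nat.lt_or_ge a (b+1) with h | h
    · exact (ihb (by omega)).trans (by rw [influenced_succ]; exact Finset.subset_union_left)
    · have : a = b + 1 := by omega
      subst this; exact subset_rfl

/-- on a path with `t(0)=t(n-1)=2`, if `S` has smallest element `i`
and second-smallest element `j`, `d = D[i] ∉ S`, and `j > 2·D[i] − i + λ − 1`
(i.e. `2d + λ < j + i + 1`), then `d` is never influenced (its two neighbors are
never simultaneously active), so `S` is not a TWC target set. -/
theorem stmt9 (n lam : ℕ) (hn : 2 ≤ n) (hlam : 1 ≤ lam) (t : Fin n → ℕ)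
    (htv : ∀ v, t v = 1 ∨ t v = 2)
    (h0 : t ⟨0, by omega⟩ = 2) (hlast : t ⟨n - 1, by omega⟩ = 2)
    (S : Finset (Fin n)) (i j d : Fin n)
    (hiS : i ∈ S) (hjS : j ∈ S) (himin : ∀ x ∈ S, i ≤ x)
    (hij : i < j) (hjsec : ∀ x ∈ S, i < x → j ≤ x)
    (hid : i < d) (htd : t d = 2)
    (hbetween : ∀ x : Fin n, i < x → x < d → t x = 1) (hdS : d ∉ S)
    (hlower : 2 * (d : ℕ) + lam < (j : ℕ) + (i : ℕ) + 1) :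
    (∀ r : ℕ, d ∉ influenced (pathGraph n) t lam S r) ∧
    ¬ isTargetSet (pathGraph n) t lam S := by
  have hidv : (i : ℕ) < (d : ℕ) := hid
  have hjdv : (d : ℕ) + 2 ≤ (j : ℕ) := by omega
  set I := influenced (pathGraph n) t lam S with hI
  have hmono : ∀ {a b : ℕ}, a ≤ b → I a ⊆ I b :=
    fun hab => influenced_mono _ _ _ _ hab
  -- adjacency characterization
  have hadj : ∀ v u : Fin n, (pathGraph n).Adj v u ↔
      ((v : ℕ) + 1 = (u : ℕ) ∨ (u : ℕ) + 1 = (v : ℕ)) := fun v u => Iff.rfl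
  have key : ∀ r : ℕ,
      (d ∉ I r ∧
       (∀ v : Fin n, (d : ℕ) < (v : ℕ) → v ∈ I r → (j : ℕ) ≤ (v : ℕ) + r) ∧
       (∀ v : Fin n, (i : ℕ) < (v : ℕ) → (v : ℕ) < (d : ℕ) → v ∈ I r →
          (v : ℕ) ≤ (i : ℕ) + r)) ∧
      (∀ v : Fin n, (i : ℕ) ≤ (v : ℕ) → (v : ℕ) < (d : ℕ) → (v : ℕ) ≤ (i : ℕ) + r →
          v ∈ I r) := by
    intro r
    induction r using Nat.strong_induction_on with
    | _ r ih =>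
      match r with
      | 0 =>
        rw [hI, influenced_zero]
        refine ⟨⟨hdS, ?_, ?_⟩, ?_⟩
        · intro v hv hvS
          have := hjsec v hvS (by exact_mod_cast (by omega : (i:ℕ) < (v:ℕ)))
          have : (j : ℕ) ≤ (v : ℕ) := this
          omega
        · intro v hv1 hv2 hvS
          have := hjsec v hvS (by exact_mod_cast hv1)
          have : (j : ℕ) ≤ (v : ℕ) := this
          omega
        · intro v hv1 hv2 hv3
          have : (v : ℕ) = (i : ℕ) := by omega
          have : v = i := Fin.ext this
          subst this; exact hiS
      | r + 1 =>
        obtain ⟨⟨hdP, hRP, hMP⟩, hQP⟩ := ih r (by omega)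
        -- the active set A
        set A := (if r + 1 ≤ lam then I r else I r \ I (r - lam)) with hA
        have hAsub : A ⊆ I r := by
          rw [hA]; split
          · exact subset_rfl
          · exact Finset.sdiff_subset
        have hsucc : I (r+1) = I r ∪
            Finset.univ.filter (fun v => t v ≤ ((pathGraph n).neighborFinset v ∩ A).card) := by
          rw [hI, hA]; exact influenced_succ _ _ _ _ _
        -- a generic way to extract a neighbor from the filter condition
        have hnewmem : ∀ v : Fin n, v ∈ I (r+1) → v ∉ I r →
            t v ≤ ((pathGraph n).neighborFinset v ∩ A).card := by
          intro v hv hv'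
          rw [hsucc] at hv
          rcases Finset.mem_union.mp hv with h | h
          · exact absurd h hv'
          · exact (Finset.mem_filter.mp h).2
        constructor
        · refine ⟨?_, ?_, ?_⟩
          · -- d not influenced
            intro hd
            have hcard := hnewmem d hd hdP
            rw [htd] at hcard
            have hc2 : 1 < ((pathGraph n).neighborFinset d ∩ A).card := by omega
            obtain ⟨a, ha, b, hb, hab⟩ := Finset.one_lt_card.mp hc2
            obtain ⟨haN, haA⟩ := Finset.mem_inter.mp ha
            obtain ⟨hbN, hbA⟩ := Finset.mem_inter.mp hb
            have haAdj := (hadj d a).mp ((SimpleGraph.mem_neighborFinset _ _ _).mp haN)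
            have hbAdj := (hadj d b).mp ((SimpleGraph.mem_neighborFinset _ _ _).mp hbN)
            -- get u1 (val + 1 = d) and u2 (val = d + 1)
            have hex : ∃ u1 u2 : Fin n, (u1 : ℕ) + 1 = (d : ℕ) ∧ (u2 : ℕ) = (d : ℕ) + 1 ∧
                u1 ∈ A ∧ u2 ∈ A := by
              rcases haAdj with h1 | h1 <;> rcases hbAdj with h2 | h2
              · exact absurd (Fin.ext (by omega)) hab
              · exact ⟨b, a, by omega, by omega, hbA, haA⟩
              · exact ⟨a, b, by omega, by omega, haA, hbA⟩
              · exact absurd (Fin.ext (by omega)) hab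
            obtain ⟨u1, u2, hu1v, hu2v, hu1A, hu2A⟩ := hex
            have hu2r : (j : ℕ) ≤ (u2 : ℕ) + r := hRP u2 (by omega) (hAsub hu2A)
            have hrbig : lam ≤ r := by omega
            have hAeq : A = I r \ I (r - lam) := by
              rw [hA, if_neg (by omega)]
            rw [hAeq] at hu1A
            have hu1not := (Finset.mem_sdiff.mp hu1A).2
            have hu1in : u1 ∈ I (r - lam) :=
              (ih (r - lam) (by omega)).2 u1 (by omega) (by omega) (by omega)
            exact hu1not hu1in
          · -- right invariant
            intro v hv hvI
            by_cases hvr : v ∈ I r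
            · have := hRP v hv hvr; omega
            · have hcard := hnewmem v hvI hvr
              have htv1 : 1 ≤ t v := by rcases htv v with h | h <;> omega
              have hc1 : 0 < ((pathGraph n).neighborFinset v ∩ A).card := by omega
              obtain ⟨u, hu⟩ := Finset.card_pos.mp hc1
              obtain ⟨huN, huA⟩ := Finset.mem_inter.mp hu
              have huAdj := (hadj v u).mp ((SimpleGraph.mem_neighborFinset _ _ _).mp huN)
              have huI : u ∈ I r := hAsub huA
              rcases huAdj with h | h
              · -- u = v + 1 > d
                have := hRP u (by omega) huI; omega
              · -- u = v - 1
                by_cases hud : (u : ℕ) = (d : ℕ)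
                · have heq : u = d := Fin.ext hud
                  exact absurd (heq ▸ huI) hdP
                · have := hRP u (by omega) huI; omega
          · -- middle invariant
            intro v hv1 hv2 hvI
            by_cases hvr : v ∈ I r
            · have := hMP v hv1 hv2 hvr; omega
            · have hcard := hnewmem v hvI hvr
              have htv1 : 1 ≤ t v := by rcases htv v with h | h <;> omega
              have hc1 : 0 < ((pathGraph n).neighborFinset v ∩ A).card := by omega
              obtain ⟨u, hu⟩ := Finset.card_pos.mp hc1
              obtain ⟨huN, huA⟩ := Finset.mem_inter.mp hu
              have huAdj := (hadj v u).mp ((SimpleGraph.mem_neighborFinset _ _ _).mp huN)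
              have huI : u ∈ I r := hAsub huA
              rcases huAdj with h | h
              · -- u = v + 1 ≤ d
                by_cases hud : (u : ℕ) = (d : ℕ)
                · exact absurd huI (by have : u = d := Fin.ext hud; rw [this]; exact hdP)
                · have := hMP u (by omega) (by omega) huI; omega
              · -- u = v - 1 ≥ i
                by_cases hui : (u : ℕ) = (i : ℕ)
                · omega
                · have := hMP u (by omega) (by omega) huI; omega
        · -- Q(r+1)
          intro v hv1 hv2 hv3
          by_cases hvr : (v : ℕ) ≤ (i : ℕ) + r
          · exact hmono (Nat.le_succ r) (hQP v hv1 hv2 hvr)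
          · have hveq : (v : ℕ) = (i : ℕ) + r + 1 := by omega
            have htv1 : t v = 1 := hbetween v (by exact_mod_cast (by omega : (i:ℕ) < (v:ℕ)))
              (by exact_mod_cast hv2)
            have hun : (i : ℕ) + r < n := by omega
            set u : Fin n := ⟨(i : ℕ) + r, by omega⟩ with hu
            have huI : u ∈ I r := hQP u (by simp [hu]) (by simp [hu]; omega) (by simp [hu])
            have huA : u ∈ A := by
              rw [hA]; split
              · exact huI
              · refine Finset.mem_sdiff.mpr ⟨huI, ?_⟩
                intro hbad
                have hr1 : 1 ≤ r := by omega
                have := (ih (r - lam) (by omega)).1.2.2 u (by simp [hu]; omega)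
                  (by simp [hu]; omega) hbad
                simp [hu] at this; omega
            have hadjvu : (pathGraph n).Adj v u := (hadj v u).mpr (Or.inr (by simp [hu]; omega))
            have hmem : u ∈ (pathGraph n).neighborFinset v ∩ A :=
              Finset.mem_inter.mpr ⟨(SimpleGraph.mem_neighborFinset _ _ _).mpr hadjvu, huA⟩
            rw [hsucc]
            refine Finset.mem_union.mpr (Or.inr (Finset.mem_filter.mpr ⟨Finset.mem_univ _, ?_⟩))
            rw [htv1]
            exact Finset.card_pos.mpr ⟨u, hmem⟩
  refine ⟨fun r => (key r).1.1, ?_⟩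
  rintro ⟨r, hr⟩
  exact (key r).1.1 (by rw [hI, hr]; exact Finset.mem_univ d)
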